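/- Let A be a unital C*-algebra and x ∈ A with ‖x‖ ≤ 1. Then x is selfadjoint if and only if for every real t, the 2×2 matrix [[t·1, x],[−x, t·1]] in M₂(A) has norm at most √(t² + 1). -/

import Mathlib

open ContinuousLinearMap in
/-- The block operator `[[a, b], [c, d]]` on the Hilbert space `H ⊕₂ H`,
realizing the canonical C*-norm on `M₂(B(H))`. -/
noncomputable def blockOp {H : Type*} [NormedAddCommGroup H] [InnerProductSpace ℂ H]
    (a b c d : H →L[ℂ] H) : WithLp 2 (H × H) →L[ℂ] WithLp 2 (H × H) :=
  (((WithLp.prodContinuousLinearEquiv 2 ℂ H H).symm : H × H →L[ℂ] WithLp 2 (H × H)).comp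
    ((a.comp (fst ℂ H H) + b.comp (snd ℂ H H)).prod
      (c.comp (fst ℂ H H) + d.comp (snd ℂ H H)))).comp
    ((WithLp.prodContinuousLinearEquiv 2 ℂ H H) : WithLp 2 (H × H) →L[ℂ] H × H)

section Aux

variable {H : Type*} [NormedAddCommGroup H] [InnerProductSpace ℂ H]

local notation "⟪" x ", " y "⟫" => @inner ℂ _ _ x y

lemma blockOp_norm_sq (a b c d : H →L[ℂ] H) (z : WithLp 2 (H × H)) :
    ‖blockOp a b c d z‖ ^ 2 = ‖a z.fst + b z.snd‖ ^ 2 + ‖c z.fst + d z.snd‖ ^ 2 := by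
  rw [WithLp.prod_norm_sq_eq_of_L2]
  simp [blockOp]

lemma key_norm_sq (x : H →L[ℂ] H) (t : ℝ) (z : WithLp 2 (H × H)) :
    ‖blockOp ((t : ℂ) • 1) x (-x) ((t : ℂ) • 1) z‖ ^ 2 =
      t ^ 2 * (‖z.fst‖ ^ 2 + ‖z.snd‖ ^ 2) + (‖x z.fst‖ ^ 2 + ‖x z.snd‖ ^ 2) +
        2 * t * ((⟪z.fst, x z.snd⟫).re - (⟪x z.fst, z.snd⟫).re) := by
  rw [blockOp_norm_sq]
  have h1 : ((t : ℂ) • (1 : H →L[ℂ] H)) z.fst + x z.snd = (t : ℂ) • z.fst + x z.snd := by simp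
  have h2 : (-x) z.fst + ((t : ℂ) • (1 : H →L[ℂ] H)) z.snd = (t : ℂ) • z.snd - x z.fst := by
    simp; abel
  rw [h1, h2, @norm_add_sq ℂ, @norm_sub_sq ℂ]
  simp only [RCLike.re_to_complex]
  have e1 : (⟪(t : ℂ) • z.fst, x z.snd⟫).re = t * (⟪z.fst, x z.snd⟫).re := by
    rw [inner_smul_left]; simp [Complex.mul_re]
  have e2 : (⟪(t : ℂ) • z.snd, x z.fst⟫).re = t * (⟪x z.fst, z.snd⟫).re := by
    rw [inner_smul_left]
    have : (⟪z.snd, x z.fst⟫).re = (⟪x z.fst, z.snd⟫).re := by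
      simpa using inner_re_symm (𝕜 := ℂ) z.snd (x z.fst)
    simp [Complex.mul_re, this]
  rw [e1, e2]
  have n1 : ‖(t:ℂ) • z.fst‖ = |t| * ‖z.fst‖ := by simp [norm_smul]
  have n2 : ‖(t:ℂ) • z.snd‖ = |t| * ‖z.snd‖ := by simp [norm_smul]
  rw [n1, n2, mul_pow, mul_pow, sq_abs]
  ring

lemma forall_mul_le_imp_zero {c C : ℝ} (h : ∀ t : ℝ, t * c ≤ C) : c = 0 := by
  by_contra hc
  rcases lt_or_gt_of_ne hc with hlt | hgt
  · have := h ((C + 1) / c)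
    rw [div_mul_cancel₀ _ (ne_of_lt hlt)] at this
    linarith
  · have := h ((C + 1) / c)
    rw [div_mul_cancel₀ _ (ne_of_gt hgt)] at this
    linarith

end Aux


/-- A contraction `x ∈ B(H)` is selfadjoint iff `‖[[t·1, x], [-x, t·1]]‖ ≤ √(t² + 1)`
for all real `t`. -/
theorem stmt10 {H : Type*} [NormedAddCommGroup H] [InnerProductSpace ℂ H] [CompleteSpace H]
    (x : H →L[ℂ] H) (hx : ‖x‖ ≤ 1) :
    IsSelfAdjoint x ↔
      ∀ t : ℝ, ‖blockOp ((t : ℂ) • 1) x (-x) ((t : ℂ) • 1)‖ ≤ Real.sqrt (t ^ 2 + 1) := by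
  constructor
  · intro hsa t
    apply ContinuousLinearMap.opNorm_le_bound _ (Real.sqrt_nonneg _)
    intro z
    have hsym := (ContinuousLinearMap.isSelfAdjoint_iff_isSymmetric.mp hsa) z.fst z.snd
    simp only [ContinuousLinearMap.coe_coe] at hsym
    have hz : ‖blockOp ((t : ℂ) • 1) x (-x) ((t : ℂ) • 1) z‖ ^ 2 ≤ (t ^ 2 + 1) * ‖z‖ ^ 2 := by
      rw [key_norm_sq, WithLp.prod_norm_sq_eq_of_L2, hsym]
      have b1 : ‖x z.fst‖ ^ 2 ≤ ‖z.fst‖ ^ 2 := by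
        have := x.le_opNorm z.fst
        nlinarith [norm_nonneg (x z.fst), norm_nonneg z.fst, mul_le_mul_of_nonneg_right hx (norm_nonneg z.fst)]
      have b2 : ‖x z.snd‖ ^ 2 ≤ ‖z.snd‖ ^ 2 := by
        have := x.le_opNorm z.snd
        nlinarith [norm_nonneg (x z.snd), norm_nonneg z.snd, mul_le_mul_of_nonneg_right hx (norm_nonneg z.snd)]
      nlinarith
    calc ‖blockOp ((t : ℂ) • 1) x (-x) ((t : ℂ) • 1) z‖
        = Real.sqrt (‖blockOp ((t : ℂ) • 1) x (-x) ((t : ℂ) • 1) z‖ ^ 2) := by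
          rw [Real.sqrt_sq (norm_nonneg _)]
      _ ≤ Real.sqrt ((t ^ 2 + 1) * ‖z‖ ^ 2) := Real.sqrt_le_sqrt hz
      _ = Real.sqrt (t ^ 2 + 1) * ‖z‖ := by
          rw [Real.sqrt_mul (by positivity), Real.sqrt_sq (norm_nonneg _)]
  · intro h
    have key : ∀ u v : H, (inner ℂ u (x v)).re = (inner ℂ (x u) v).re := by
      intro u v
      have hz : ∀ t : ℝ,
          t * (2 * ((inner ℂ u (x v)).re - (inner ℂ (x u) v).re)) ≤
            (‖u‖ ^ 2 + ‖v‖ ^ 2) - (‖x u‖ ^ 2 + ‖x v‖ ^ 2) := by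
        intro t
        set T := blockOp ((t : ℂ) • 1) x (-x) ((t : ℂ) • 1) with hT
        set z : WithLp 2 (H × H) := (WithLp.equiv 2 (H × H)).symm (u, v) with hzdef
        have hz1 : z.fst = u := rfl
        have hz2 : z.snd = v := rfl
        have h1 : ‖T z‖ ≤ Real.sqrt (t ^ 2 + 1) * ‖z‖ :=
          le_trans (T.le_opNorm z) (mul_le_mul_of_nonneg_right (h t) (norm_nonneg z))
        have h2 : ‖T z‖ ^ 2 ≤ (t ^ 2 + 1) * ‖z‖ ^ 2 := by
          nlinarith [Real.sq_sqrt (show (0:ℝ) ≤ t ^ 2 + 1 by positivity),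
            norm_nonneg (T z), Real.sqrt_nonneg (t ^ 2 + 1), norm_nonneg z]
        rw [hT, key_norm_sq, WithLp.prod_norm_sq_eq_of_L2, hz1, hz2] at h2
        linarith
      have := forall_mul_le_imp_zero hz
      linarith
    have hsym : (x : H →ₗ[ℂ] H).IsSymmetric := by
      intro u v
      simp only [ContinuousLinearMap.coe_coe]
      apply Complex.ext
      · simpa using (key u v).symm
      · have h1 := key u (Complex.I • v)
        rw [map_smul, inner_smul_right, inner_smul_right] at h1
        simp only [Complex.mul_re, Complex.I_re, Complex.I_im] at h1
        simpa using h1.symm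
    exact hsym.isSelfAdjoint
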